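/- Let f : [0,T] → ℝ be absolutely continuous and attain its maximum over [0,T] at a point t₀ ∈ (0, T]. (i) If β ∈ (0,1] and f′ ∈ L^{1/(1−β)}(κ, T) for every κ > 0, then for every α ∈ (0, β): (1/Γ(1−α)) ∫₀^{t₀} (t₀ − τ)^{−α} f′(τ) dτ ≥ 0. (ii) In particular, if f′ ∈ L^∞(κ, T) for every κ > 0, then (D^α f)(t₀) ≥ 0 for every α ∈ (0,1), and ∫₀¹ (D^α f)(t₀) μ(α) dα ≥ 0 for every nonnegative μ ∈ L¹(0,1). -/

import Mathlib

open MeasureTheory Set Real Filter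
open scoped ENNReal NNReal Topology

/-- The Caputo derivative of an absolutely continuous function with a.e. derivative
`f'`, evaluated at `t`: `(D^α f)(t) = (1/Γ(1-α)) ∫₀^t (t-τ)^{-α} f'(τ) dτ`. -/
noncomputable def caputo (f' : ℝ → ℝ) (α t : ℝ) : ℝ :=
  (1 / Real.Gamma (1 - α)) * ∫ τ in (0:ℝ)..t, (t - τ) ^ (-α) * f' τ


lemma fubini_tri (S : ℝ) (φ g : ℝ → ℝ) (C : ℝ)
    (hφ : AEStronglyMeasurable φ (volume.restrict (Ioc (0:ℝ) S)))
    (hφC : ∀ s ∈ Ioc (0:ℝ) S, ‖φ s‖ ≤ C)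
    (hg : IntegrableOn g (Ioc (0:ℝ) S)) :
    ∫ τ in Ioc (0:ℝ) S, (∫ s in Ioc τ S, φ s) * g τ
      = ∫ s in Ioc (0:ℝ) S, φ s * (∫ τ in Ioc (0:ℝ) s, g τ) := by
  set ν := volume.restrict (Ioc (0:ℝ) S) with hν
  set F : ℝ × ℝ → ℝ :=
    ({q : ℝ × ℝ | q.1 < q.2}).indicator (fun q => φ q.2 * g q.1) with hF
  have hlt : MeasurableSet {q : ℝ × ℝ | q.1 < q.2} :=
    measurableSet_lt measurable_fst measurable_snd
  have hFm : AEStronglyMeasurable F (ν.prod ν) :=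
    ((hφ.comp_snd.mul hg.aestronglyMeasurable.comp_fst)).indicator hlt
  have hmem : ∀ᵐ p ∂(ν.prod ν), p.1 ∈ Ioc (0:ℝ) S ∧ p.2 ∈ Ioc (0:ℝ) S := by
    rw [hν, Measure.prod_restrict]
    filter_upwards [ae_restrict_mem (measurableSet_Ioc.prod measurableSet_Ioc)] with p hp
    exact hp
  have hC0 : ∀ p : ℝ × ℝ, p.1 ∈ Ioc (0:ℝ) S ∧ p.2 ∈ Ioc (0:ℝ) S → ‖F p‖ ≤ C * ‖g p.1‖ := by
    rintro ⟨τ, s⟩ ⟨h1, h2⟩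
    by_cases h : τ < s
    · rw [hF, indicator_of_mem (show ((τ,s) : ℝ × ℝ) ∈ {q : ℝ × ℝ | q.1 < q.2} from h)]
      rw [norm_mul]
      exact mul_le_mul_of_nonneg_right (hφC s h2) (norm_nonneg _)
    · rw [hF, indicator_of_notMem (show ((τ,s) : ℝ × ℝ) ∉ {q : ℝ × ℝ | q.1 < q.2} from h), norm_zero]
      exact mul_nonneg ((norm_nonneg (φ s)).trans (hφC s h2)) (norm_nonneg _)
  have hFint : Integrable F (ν.prod ν) := by
    refine Integrable.mono' (g := fun p => C * ‖g p.1‖) ?_ hFm ?_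
    · have : Integrable (fun p : ℝ × ℝ => (C * ‖g p.1‖) * (1 : ℝ)) (ν.prod ν) :=
        (hg.norm.const_mul C).mul_prod (integrable_const 1)
      simpa using this
    · filter_upwards [hmem] with p hp using hC0 p hp
  have swap := MeasureTheory.integral_integral_swap
    (f := fun τ s => F (τ, s)) (μ := ν) (ν := ν) (by exact hFint)
  calc ∫ τ in Ioc (0:ℝ) S, (∫ s in Ioc τ S, φ s) * g τ
      = ∫ τ, (∫ s, F (τ, s) ∂ν) ∂ν := by
        refine setIntegral_congr_fun measurableSet_Ioc (fun τ hτ => ?_)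
        have : (fun s => F (τ, s)) = (Ioi τ).indicator (fun s => φ s * g τ) := by
          ext s
          by_cases h : τ < s
          · simp [hF, indicator_of_mem, h, Set.mem_Ioi]
          · simp [hF, indicator_of_notMem, h, Set.mem_Ioi]
        rw [this, setIntegral_indicator measurableSet_Ioi]
        have hset : Ioc (0:ℝ) S ∩ Ioi τ = Ioc τ S := by
          ext x; simp only [mem_inter_iff, mem_Ioc, mem_Ioi]
          constructor
          · rintro ⟨⟨_, hx2⟩, hx3⟩; exact ⟨hx3, hx2⟩
          · rintro ⟨hx1, hx2⟩; exact ⟨⟨lt_of_le_of_lt hτ.1.le hx1, hx2⟩, hx1⟩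
        rw [hset, integral_mul_const]
    _ = ∫ s, (∫ τ, F (τ, s) ∂ν) ∂ν := swap
    _ = ∫ s in Ioc (0:ℝ) S, φ s * (∫ τ in Ioc (0:ℝ) s, g τ) := by
        refine setIntegral_congr_fun measurableSet_Ioc (fun s hs => ?_)
        have : (fun τ => F (τ, s)) = (Iio s).indicator (fun τ => φ s * g τ) := by
          ext τ
          by_cases h : τ < s
          · simp [hF, indicator_of_mem, h, Set.mem_Iio]
          · simp [hF, indicator_of_notMem, h, Set.mem_Iio]
        rw [this, setIntegral_indicator measurableSet_Iio]
        have hset : Ioc (0:ℝ) S ∩ Iio s = Ioo 0 s := by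
          ext x; simp only [mem_inter_iff, mem_Ioc, mem_Iio, mem_Ioo]
          constructor
          · rintro ⟨⟨hx1, _⟩, hx3⟩; exact ⟨hx1, hx3⟩
          · rintro ⟨hx1, hx2⟩; exact ⟨⟨hx1, hx2.le.trans hs.2⟩, hx2⟩
        rw [hset, integral_const_mul, ← integral_Ioc_eq_integral_Ioo]


lemma stepB (T : ℝ) (f f' : ℝ → ℝ)
    (hf'int : IntervalIntegrable f' volume 0 T)
    (hfAC : ∀ t ∈ Icc (0:ℝ) T, f t = f 0 + ∫ s in (0:ℝ)..t, f' s)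
    (t₀ : ℝ) (ht₀ : 0 < t₀) (ht₀T : t₀ ≤ T)
    (hmax : ∀ t ∈ Icc (0:ℝ) T, f t ≤ f t₀)
    (α : ℝ) (hα : 0 < α) (S : ℝ) (hS : S ∈ Ioo 0 t₀) :
    (t₀ - S) ^ (-α) * (f S - f t₀) ≤ ∫ τ in (0:ℝ)..S, (t₀ - τ) ^ (-α) * f' τ := by
  obtain ⟨hS0, hSt⟩ := hS
  have hST : S ≤ T := hSt.le.trans ht₀T
  have hT0 : (0:ℝ) ≤ T := ht₀.le.trans ht₀T
  set φ : ℝ → ℝ := fun s => α * (t₀ - s) ^ (-α - 1) with hφdef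
  -- continuity facts
  have hu : ContinuousOn (fun τ : ℝ => (t₀ - τ) ^ (-α)) (Icc 0 S) := by
    apply ContinuousOn.rpow_const
    · exact (continuous_const.sub continuous_id).continuousOn
    · intro τ hτ; exact Or.inl (by simp; nlinarith [hτ.2])
  have hφc : ContinuousOn φ (Icc 0 S) := by
    apply continuousOn_const.mul
    apply ContinuousOn.rpow_const
    · exact (continuous_const.sub continuous_id).continuousOn
    · intro τ hτ; exact Or.inl (by simp; nlinarith [hτ.2])
  -- E1 : kernel identity
  have E1 : ∀ τ ∈ Icc (0:ℝ) S, ∫ s in τ..S, φ s = (t₀ - S) ^ (-α) - (t₀ - τ) ^ (-α) := by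
    intro τ hτ
    have hder : ∀ x ∈ Set.uIcc τ S, HasDerivAt (fun s : ℝ => (t₀ - s) ^ (-α)) (φ x) x := by
      intro x hx
      rw [uIcc_of_le hτ.2] at hx
      have hxt : 0 < t₀ - x := by nlinarith [hx.2]
      have h1 : HasDerivAt (fun s : ℝ => t₀ - s) (-1) x := (hasDerivAt_id x).const_sub t₀
      have h2 : HasDerivAt (fun y : ℝ => y ^ (-α)) (-α * (t₀ - x) ^ (-α - 1)) (t₀ - x) :=
        Real.hasDerivAt_rpow_const (Or.inl hxt.ne')
      have := h2.comp x h1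
      convert this using 1
      show φ x = -α * (t₀ - x) ^ (-α - 1) * -1
      simp only [hφdef]; ring
      all_goals rfl
    have hint : IntervalIntegrable φ volume τ S := by
      apply ContinuousOn.intervalIntegrable
      rw [uIcc_of_le hτ.2]
      exact hφc.mono (Icc_subset_Icc hτ.1 le_rfl)
    exact intervalIntegral.integral_eq_sub_of_hasDerivAt hder hint
  -- interval integrabilities
  have hf'S : IntervalIntegrable f' volume 0 S := by
    apply hf'int.mono_set
    rw [Set.uIcc_of_le hS0.le, Set.uIcc_of_le hT0]
    exact Icc_subset_Icc le_rfl hST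
  have huS : ContinuousOn (fun τ : ℝ => (t₀ - τ) ^ (-α)) (Set.uIcc 0 S) := by
    rw [uIcc_of_le hS0.le]; exact hu
  have hmul1 : IntervalIntegrable (fun τ => (t₀ - τ) ^ (-α) * f' τ) volume 0 S :=
    hf'S.continuousOn_mul huS
  have hmul2 : IntervalIntegrable (fun τ => ((t₀ - S) ^ (-α) - (t₀ - τ) ^ (-α)) * f' τ)
      volume 0 S := hf'S.continuousOn_mul (continuousOn_const.sub huS)
  have hmul3 : IntervalIntegrable (fun τ => (t₀ - S) ^ (-α) * f' τ) volume 0 S :=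
    hf'S.const_mul _
  -- continuity of f
  have hfc : ContinuousOn f (Icc 0 T) := by
    have hI : IntegrableOn f' (uIcc 0 T) := by
      rw [uIcc_of_le hT0]
      exact (integrableOn_Icc_iff_integrableOn_Ioc).mpr
        ((intervalIntegrable_iff_integrableOn_Ioc_of_le hT0).mp hf'int)
    have hc : ContinuousOn (fun t => f 0 + ∫ s in (0:ℝ)..t, f' s) (Icc 0 T) := by
      have := intervalIntegral.continuousOn_primitive_interval (a := 0) (b := T) (μ := volume)
        (f := f') ?_
      · apply continuousOn_const.add
        rw [uIcc_of_le hT0] at this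
        exact this
      · rwa [uIcc_of_le hT0] at hI ⊢
    exact hc.congr (fun t ht => hfAC t ht)
  -- split
  have split : ∫ τ in (0:ℝ)..S, (t₀ - τ) ^ (-α) * f' τ
      = (∫ τ in (0:ℝ)..S, (t₀ - S) ^ (-α) * f' τ)
        - ∫ τ in (0:ℝ)..S, ((t₀ - S) ^ (-α) - (t₀ - τ) ^ (-α)) * f' τ := by
    rw [← intervalIntegral.integral_sub hmul3 hmul2]
    congr 1; ext τ; ring
  -- fubini
  obtain ⟨C, hC⟩ := isCompact_Icc.exists_bound_of_continuousOn hφc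
  have fub : ∫ τ in (0:ℝ)..S, ((t₀ - S) ^ (-α) - (t₀ - τ) ^ (-α)) * f' τ
      = ∫ s in Ioc (0:ℝ) S, φ s * (f s - f 0) := by
    rw [intervalIntegral.integral_of_le hS0.le]
    calc ∫ τ in Ioc (0:ℝ) S, ((t₀ - S) ^ (-α) - (t₀ - τ) ^ (-α)) * f' τ
        = ∫ τ in Ioc (0:ℝ) S, (∫ s in Ioc τ S, φ s) * f' τ := by
          refine setIntegral_congr_fun measurableSet_Ioc (fun τ hτ => ?_)
          rw [← intervalIntegral.integral_of_le hτ.2, E1 τ ⟨hτ.1.le, hτ.2⟩]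
      _ = ∫ s in Ioc (0:ℝ) S, φ s * (∫ τ in Ioc (0:ℝ) s, f' τ) := by
          apply fubini_tri S φ f' C
          · exact (hφc.mono Ioc_subset_Icc_self).aestronglyMeasurable measurableSet_Ioc
          · exact fun s hs => hC s (Ioc_subset_Icc_self hs)
          · exact (intervalIntegrable_iff_integrableOn_Ioc_of_le hS0.le).mp hf'S
      _ = ∫ s in Ioc (0:ℝ) S, φ s * (f s - f 0) := by
          refine setIntegral_congr_fun measurableSet_Ioc (fun s hs => ?_)
          have : f s = f 0 + ∫ u in (0:ℝ)..s, f' u := hfAC s ⟨hs.1.le, hs.2.trans hST⟩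
          rw [← intervalIntegral.integral_of_le hs.1.le]
          rw [this]; ring
  -- pointwise bound under the integral
  have hφnn : ∀ s ∈ Ioc (0:ℝ) S, 0 ≤ φ s := by
    intro s hs
    exact mul_nonneg hα.le (Real.rpow_nonneg (by nlinarith [hs.2]) _)
  have int1 : IntegrableOn (fun s => φ s * (f s - f 0)) (Ioc 0 S) := by
    apply (ContinuousOn.integrableOn_Icc ?_).mono_set Ioc_subset_Icc_self
    exact hφc.mul ((hfc.mono (Icc_subset_Icc le_rfl hST)).sub continuousOn_const)
  have int2 : IntegrableOn (fun s => φ s * (f t₀ - f 0)) (Ioc 0 S) := by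
    apply (ContinuousOn.integrableOn_Icc ?_).mono_set Ioc_subset_Icc_self
    exact hφc.mul continuousOn_const
  have bnd : ∫ s in Ioc (0:ℝ) S, φ s * (f s - f 0) ≤ ∫ s in Ioc (0:ℝ) S, φ s * (f t₀ - f 0) := by
    refine setIntegral_mono_on int1 int2 measurableSet_Ioc (fun s hs => ?_)
    exact mul_le_mul_of_nonneg_left
      (sub_le_sub_right (hmax s ⟨hs.1.le, hs.2.trans hST⟩) _) (hφnn s hs)
  have rhs : ∫ s in Ioc (0:ℝ) S, φ s * (f t₀ - f 0)
      = ((t₀ - S) ^ (-α) - t₀ ^ (-α)) * (f t₀ - f 0) := by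
    rw [integral_mul_const]
    congr 1
    rw [← intervalIntegral.integral_of_le hS0.le, E1 0 ⟨le_rfl, hS0.le⟩, sub_zero]
  -- first integral value
  have hfS : ∫ τ in (0:ℝ)..S, (t₀ - S) ^ (-α) * f' τ = (t₀ - S) ^ (-α) * (f S - f 0) := by
    rw [intervalIntegral.integral_const_mul]
    congr 1
    have := hfAC S ⟨hS0.le, hST⟩
    linarith [this]
  -- combine
  have hMmax : f 0 ≤ f t₀ := hmax 0 ⟨le_rfl, hT0⟩
  have ht₀nn : (0:ℝ) ≤ t₀ ^ (-α) := Real.rpow_nonneg ht₀.le _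
  have key : ((t₀ - S) ^ (-α)) * (f S - f 0) - ((t₀ - S) ^ (-α) - t₀ ^ (-α)) * (f t₀ - f 0)
      - (t₀ - S) ^ (-α) * (f S - f t₀) = t₀ ^ (-α) * (f t₀ - f 0) := by ring
  have hpos : 0 ≤ t₀ ^ (-α) * (f t₀ - f 0) := mul_nonneg ht₀nn (by linarith)
  rw [split, fub, hfS]
  linarith [bnd, rhs, key, hpos]

lemma key (T : ℝ) (f f' : ℝ → ℝ)
    (hf'int : IntervalIntegrable f' volume 0 T)
    (hfAC : ∀ t ∈ Icc (0:ℝ) T, f t = f 0 + ∫ s in (0:ℝ)..t, f' s)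
    (t₀ : ℝ) (ht₀ : t₀ ∈ Ioc (0:ℝ) T)
    (hmax : ∀ t ∈ Icc (0:ℝ) T, f t ≤ f t₀)
    (β : ℝ) (hβ : β ∈ Ioc (0:ℝ) 1)
    (hLp : MemLp f' (1 / ENNReal.ofReal (1 - β)) (volume.restrict (Ioo (t₀/2) T)))
    (α : ℝ) (hα : α ∈ Ioo (0:ℝ) β) :
    0 ≤ ∫ τ in (0:ℝ)..t₀, (t₀ - τ) ^ (-α) * f' τ := by
  obtain ⟨ht₀0, ht₀T⟩ := ht₀
  obtain ⟨hα0, hαβ⟩ := hα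
  obtain ⟨hβ0, hβ1⟩ := hβ
  have hT0 : (0:ℝ) ≤ T := ht₀0.le.trans ht₀T
  set q : ℝ≥0∞ := 1 / ENNReal.ofReal (1 - β) with hq
  by_cases hint : IntervalIntegrable (fun τ => (t₀ - τ) ^ (-α) * f' τ) volume 0 t₀
  swap
  · rw [intervalIntegral.integral_undef hint]
  set κ := t₀ / 2 with hκ
  have hκ0 : 0 < κ := by positivity
  have hκt : κ < t₀ := by rw [hκ]; linarith
  set C := (eLpNorm f' q (volume.restrict (Ioo κ T))).toReal with hCdef
  have hCnn : 0 ≤ C := ENNReal.toReal_nonneg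
  have hq1 : (1:ℝ≥0∞) ≤ q := by
    rw [hq]
    have h1 : ENNReal.ofReal (1 - β) ≤ 1 := by
      rw [show (1:ℝ≥0∞) = ENNReal.ofReal 1 by simp]
      exact ENNReal.ofReal_le_ofReal (by linarith)
    calc (1:ℝ≥0∞) = 1 / 1 := by simp
      _ ≤ 1 / ENNReal.ofReal (1 - β) := ENNReal.div_le_div_left h1 1
  have hexp : 1 / (1:ℝ≥0∞).toReal - 1 / q.toReal = β := by
    by_cases hb : β = 1
    · subst hb
      have : q = ∞ := by rw [hq]; simp
      rw [this]
      simp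
    · have hb' : 0 < 1 - β := by cases lt_or_eq_of_le hβ1 with
        | inl h => linarith
        | inr h => exact absurd h hb
      have : q.toReal = (1 - β)⁻¹ := by
        rw [hq, one_div, ENNReal.toReal_inv, ENNReal.toReal_ofReal hb'.le]
      rw [this]
      simp only [ENNReal.toReal_one]
      rw [one_div, one_div, inv_inv]
      ring
  -- Hölder bound
  have hold : ∀ S ∈ Ioo κ t₀, f t₀ - f S ≤ C * (t₀ - S) ^ β := by
    intro S hSm
    obtain ⟨hκS, hSt⟩ := hSm
    have hS0 : 0 < S := hκ0.trans hκS
    have hST : S ≤ T := hSt.le.trans ht₀T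
    have hf'S : IntervalIntegrable f' volume 0 S := by
      apply hf'int.mono_set
      rw [Set.uIcc_of_le hS0.le, Set.uIcc_of_le hT0]
      exact Icc_subset_Icc le_rfl hST
    have hf'II : IntervalIntegrable f' volume S t₀ := by
      apply hf'int.mono_set
      rw [Set.uIcc_of_le hSt.le, Set.uIcc_of_le hT0]
      exact Icc_subset_Icc hS0.le ht₀T
    have hAE : AEStronglyMeasurable f' (volume.restrict (Ioc S t₀)) :=
      hf'II.1.aestronglyMeasurable
    have e0 : f t₀ - f S = ∫ τ in S..t₀, f' τ := by
      rw [hfAC t₀ ⟨ht₀0.le, ht₀T⟩, hfAC S ⟨hS0.le, hST⟩]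
      have := intervalIntegral.integral_add_adjacent_intervals hf'S hf'II
      linarith
    have e1 : ∫ τ in S..t₀, f' τ ≤ ∫ τ in Ioc S t₀, ‖f' τ‖ := by
      rw [intervalIntegral.integral_of_le hSt.le]
      have h := MeasureTheory.norm_integral_le_integral_norm (f := f')
        (μ := volume.restrict (Ioc S t₀))
      rw [Real.norm_eq_abs] at h
      exact (le_abs_self _).trans h
    have e2 : ∫ τ in Ioc S t₀, ‖f' τ‖ = (eLpNorm f' 1 (volume.restrict (Ioc S t₀))).toReal := by
      rw [eLpNorm_one_eq_lintegral_enorm, integral_norm_eq_lintegral_enorm hAE]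
    have e3 : eLpNorm f' 1 (volume.restrict (Ioc S t₀))
        ≤ eLpNorm f' q (volume.restrict (Ioc S t₀)) * (ENNReal.ofReal (t₀ - S)) ^ β := by
      have h := eLpNorm_le_eLpNorm_mul_rpow_measure_univ (p := 1) (q := q) hq1 hAE
      rwa [Measure.restrict_apply_univ, Real.volume_Ioc, hexp] at h
    have e4 : eLpNorm f' q (volume.restrict (Ioc S t₀))
        ≤ eLpNorm f' q (volume.restrict (Ioo κ T)) := by
      have h5 : volume.restrict (Ioc S t₀) = volume.restrict (Ioo S t₀) :=
        (Measure.restrict_congr_set Ioo_ae_eq_Ioc).symm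
      rw [h5]
      exact eLpNorm_mono_measure f'
        (Measure.restrict_mono (Ioo_subset_Ioo hκS.le ht₀T) le_rfl)
    calc f t₀ - f S ≤ (eLpNorm f' 1 (volume.restrict (Ioc S t₀))).toReal := by
          rw [e0, ← e2]; exact e1
      _ ≤ ((eLpNorm f' q (volume.restrict (Ioo κ T))) * (ENNReal.ofReal (t₀ - S)) ^ β).toReal := by
          apply ENNReal.toReal_mono
          · exact ENNReal.mul_ne_top hLp.eLpNorm_ne_top
              (ENNReal.rpow_ne_top_of_nonneg hβ0.le ENNReal.ofReal_ne_top)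
          · exact e3.trans (mul_le_mul_left e4 _)
      _ = C * (t₀ - S) ^ β := by
          rw [ENNReal.toReal_mul, hCdef]
          congr 1
          rw [← ENNReal.toReal_rpow, ENNReal.toReal_ofReal (by linarith)]
  -- eventual inequality
  have hineq : ∀ S ∈ Ioo κ t₀,
      -(C * (t₀ - S) ^ (β - α)) ≤ ∫ τ in (0:ℝ)..S, (t₀ - τ) ^ (-α) * f' τ := by
    intro S hSm
    have h1 := stepB T f f' hf'int hfAC t₀ ht₀0 ht₀T hmax α hα0 S ⟨hκ0.trans hSm.1, hSm.2⟩
    have hpos : 0 < t₀ - S := by linarith [hSm.2]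
    have h3 := hold S hSm
    have h4 : (t₀ - S) ^ (-α) * (f t₀ - f S) ≤ (t₀ - S) ^ (-α) * (C * (t₀ - S) ^ β) :=
      mul_le_mul_of_nonneg_left h3 (Real.rpow_nonneg hpos.le _)
    have hrw : (t₀ - S) ^ (-α) * (C * (t₀ - S) ^ β) = C * (t₀ - S) ^ (β - α) := by
      rw [show β - α = -α + β by ring, Real.rpow_add hpos]
      ring
    have e : (t₀ - S) ^ (-α) * (f S - f t₀) = -((t₀ - S) ^ (-α) * (f t₀ - f S)) := by ring
    linarith [h1, h4, hrw, e]
  -- limits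
  have hIcc : IntegrableOn (fun τ => (t₀ - τ) ^ (-α) * f' τ) (Set.uIcc 0 t₀) := by
    rw [Set.uIcc_of_le ht₀0.le]
    exact (integrableOn_Icc_iff_integrableOn_Ioc).mpr
      ((intervalIntegrable_iff_integrableOn_Ioc_of_le ht₀0.le).mp hint)
  have hcont : ContinuousOn (fun S => ∫ τ in (0:ℝ)..S, (t₀ - τ) ^ (-α) * f' τ)
      (Set.uIcc 0 t₀) := intervalIntegral.continuousOn_primitive_interval hIcc
  have hev : ∀ᶠ S in 𝓝[Iio t₀] t₀, S ∈ Ioo κ t₀ := by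
    have h1 : ∀ᶠ S in 𝓝[Iio t₀] t₀, S ∈ Iio t₀ := eventually_mem_nhdsWithin
    have h2 : ∀ᶠ S in 𝓝[Iio t₀] t₀, κ < S :=
      eventually_nhdsWithin_of_eventually_nhds (eventually_gt_nhds hκt)
    filter_upwards [h1, h2] with S hS1 hS2
    exact ⟨hS2, hS1⟩
  have hid : Tendsto (fun S : ℝ => S) (𝓝[Iio t₀] t₀) (𝓝[Set.uIcc 0 t₀] t₀) := by
    apply tendsto_nhdsWithin_of_tendsto_nhds_of_eventually_within
    · exact tendsto_id.mono_left nhdsWithin_le_nhds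
    · filter_upwards [hev] with S hS
      rw [Set.uIcc_of_le ht₀0.le]
      exact ⟨(hκ0.trans hS.1).le, hS.2.le⟩
  have hlim1 : Tendsto (fun S => ∫ τ in (0:ℝ)..S, (t₀ - τ) ^ (-α) * f' τ)
      (𝓝[Iio t₀] t₀) (𝓝 (∫ τ in (0:ℝ)..t₀, (t₀ - τ) ^ (-α) * f' τ)) := by
    have h := hcont t₀ (by rw [Set.uIcc_of_le ht₀0.le]; exact ⟨ht₀0.le, le_rfl⟩)
    exact h.tendsto.comp hid
  have hlim2 : Tendsto (fun S : ℝ => -(C * (t₀ - S) ^ (β - α))) (𝓝[Iio t₀] t₀) (𝓝 0) := by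
    have h0 : Tendsto (fun S : ℝ => t₀ - S) (𝓝[Iio t₀] t₀) (𝓝 0) := by
      have hc : Tendsto (fun S : ℝ => t₀ - S) (𝓝 t₀) (𝓝 (t₀ - t₀)) :=
        (continuous_const.sub continuous_id).tendsto t₀
      rw [sub_self] at hc
      exact hc.mono_left nhdsWithin_le_nhds
    have h1 : Tendsto (fun x : ℝ => x ^ (β - α)) (𝓝 0) (𝓝 0) := by
      have hc := (Real.continuousAt_rpow_const 0 (β - α) (Or.inr (by linarith))).tendsto
      rwa [Real.zero_rpow (by linarith : β - α ≠ 0)] at hc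
    have := ((h1.comp h0).const_mul C).neg
    simpa using this
  have := le_of_tendsto_of_tendsto hlim2 hlim1
    (by filter_upwards [hev] with S hS using hineq S hS)
  linarith


theorem caputo_extremum_principle (T : ℝ) (hT : 0 < T)
    (f f' : ℝ → ℝ)
    (hf'int : IntervalIntegrable f' volume 0 T)
    (hfAC : ∀ t ∈ Icc (0:ℝ) T, f t = f 0 + ∫ s in (0:ℝ)..t, f' s)
    (t₀ : ℝ) (ht₀ : t₀ ∈ Ioc (0:ℝ) T)
    (hmax : ∀ t ∈ Icc (0:ℝ) T, f t ≤ f t₀) :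
    (∀ β : ℝ, β ∈ Ioc (0:ℝ) 1 →
      (∀ κ > (0:ℝ), MemLp f' (1 / ENNReal.ofReal (1 - β))
        (volume.restrict (Ioo κ T))) →
      ∀ α ∈ Ioo (0:ℝ) β, 0 ≤ caputo f' α t₀) ∧
    ((∀ κ > (0:ℝ), ∃ M : ℝ, ∀ᵐ t ∂(volume.restrict (Ioo κ T)), |f' t| ≤ M) →
      (∀ α ∈ Ioo (0:ℝ) 1, 0 ≤ caputo f' α t₀) ∧
      (∀ μ : ℝ → ℝ, Measurable μ → (∀ α ∈ Icc (0:ℝ) 1, 0 ≤ μ α) →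
        IntegrableOn μ (Ioo 0 1) →
        0 ≤ ∫ α in Ioo (0:ℝ) 1, caputo f' α t₀ * μ α)) := by
  have ht₀0 : 0 < t₀ := ht₀.1
  constructor
  · intro β hβ hLp α hα
    have h := key T f f' hf'int hfAC t₀ ht₀ hmax β hβ
      (hLp (t₀ / 2) (by positivity)) α hα
    unfold caputo
    apply mul_nonneg _ h
    apply le_of_lt
    apply one_div_pos.mpr
    exact Real.Gamma_pos_of_pos (by linarith [hα.2, hβ.2])
  · intro hbd
    have hpt : ∀ α ∈ Ioo (0:ℝ) 1, 0 ≤ caputo f' α t₀ := by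
      intro α hα
      set β : ℝ := (α + 1) / 2 with hβdef
      have hβ : β ∈ Ioc (0:ℝ) 1 := ⟨by rw [hβdef]; linarith [hα.1], by rw [hβdef]; linarith [hα.2]⟩
      have hαβ : α ∈ Ioo (0:ℝ) β := ⟨hα.1, by rw [hβdef]; linarith [hα.2]⟩
      obtain ⟨M, hM⟩ := hbd (t₀ / 2) (by positivity)
      have hLp : MemLp f' (1 / ENNReal.ofReal (1 - β)) (volume.restrict (Ioo (t₀/2) T)) := by
        haveI : IsFiniteMeasure (volume.restrict (Ioo (t₀/2) T)) :=
          ⟨by rw [Measure.restrict_apply_univ]; exact measure_Ioo_lt_top⟩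
        refine MemLp.of_bound ?_ M ?_
        · refine hf'int.1.aestronglyMeasurable.mono_measure
            (Measure.restrict_mono (show Ioo (t₀/2) T ⊆ Ioc 0 T from fun x hx => ⟨by linarith [hx.1, ht₀0], hx.2.le⟩) le_rfl)
        · filter_upwards [hM] with x hx
          rwa [Real.norm_eq_abs]
      have h := key T f f' hf'int hfAC t₀ ht₀ hmax β hβ hLp α hαβ
      unfold caputo
      apply mul_nonneg _ h
      apply le_of_lt
      apply one_div_pos.mpr
      exact Real.Gamma_pos_of_pos (by linarith [hα.2])
    refine ⟨hpt, ?_⟩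
    intro μ hμm hμnn hμint
    apply setIntegral_nonneg measurableSet_Ioo
    intro α hα
    exact mul_nonneg (hpt α hα) (hμnn α ⟨hα.1.le, hα.2.le⟩)
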